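/- arXiv:2310.04599 — 2 statements merged into one kernel-verified Lean document; each statement's English description precedes it below -/
import Mathlib

section
/- Let Φ be a quantum channel with Kraus operators (V_i), and suppose M is an orthogonal projector commuting with each V_i. If the quantum trajectory is defined by ρ_{n+1} = V_{i_n} ρ_n V_{i_n}† / tr(V_{i_n} ρ_n V_{i_n}†) with outcome i chosen with probability tr(V_i ρ_n V_i†), then (tr(M ρ_n))_n is a bounded martingale; in particular E[tr(M ρ_n)] = tr(M ρ_0) for all n. -/
open Matrix BigOperators
open scoped ComplexOrder

/-- The operator V_I = V_{i_n} ⋯ V_{i_1} associated to a word I = (i_1, …, i_n). -/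
noncomputable def wordOp {d : ℕ} {O : Type*} (V : O → Matrix (Fin d) (Fin d) ℂ)
    {n : ℕ} (I : Fin n → O) : Matrix (Fin d) (Fin d) ℂ :=
  (List.ofFn fun k => V (I k)).reverse.prod

section aux

variable {d : ℕ}

/-- For a PSD complex matrix, the trace is a nonnegative real, and it vanishes only if the
matrix is zero. -/
lemma psd_trace_facts {A : Matrix (Fin d) (Fin d) ℂ} (hA : A.PosSemidef) :
    A.trace = (A.trace.re : ℂ) ∧ 0 ≤ A.trace.re ∧ (A.trace.re = 0 → A = 0) := by
  obtain ⟨B, rfl⟩ : ∃ B : Matrix (Fin d) (Fin d) ℂ, A = Bᴴ * B := by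
    open scoped MatrixOrder in
    obtain ⟨X, hX, -, hXA⟩ :=
      CFC.exists_sqrt_of_isSelfAdjoint_of_quasispectrumRestricts hA.isHermitian
        (QuasispectrumRestricts.nnreal_of_nonneg hA.nonneg)
    refine ⟨X, ?_⟩
    have hXs : Xᴴ = X := hX.star_eq
    rw [hXs, hXA]
  have htr : (Bᴴ * B).trace = ((∑ j, ∑ i, Complex.normSq (B i j) : ℝ) : ℂ) := by
    simp only [Matrix.trace, Matrix.diag, Matrix.mul_apply, Matrix.conjTranspose_apply]
    push_cast
    refine Finset.sum_congr rfl fun j _ => Finset.sum_congr rfl fun i _ => ?_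
    rw [Complex.normSq_eq_conj_mul_self]
    rfl
  have hre : (Bᴴ * B).trace.re = ∑ j, ∑ i, Complex.normSq (B i j) := by
    rw [htr, Complex.ofReal_re]
  refine ⟨by rw [hre, htr], ?_, ?_⟩
  · rw [hre]
    exact Finset.sum_nonneg fun j _ => Finset.sum_nonneg fun i _ => Complex.normSq_nonneg _
  · intro h0
    rw [hre] at h0
    have hB : B = 0 := by
      ext i j
      have h1 : ∀ j ∈ Finset.univ, (0:ℝ) ≤ ∑ i, Complex.normSq (B i j) := by
        intro j _; exact Finset.sum_nonneg fun i _ => Complex.normSq_nonneg _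
      have h2 := (Finset.sum_eq_zero_iff_of_nonneg h1).mp h0 j (Finset.mem_univ j)
      have h3 : ∀ i ∈ Finset.univ, (0:ℝ) ≤ Complex.normSq (B i j) := by
        intro i _; exact Complex.normSq_nonneg _
      have h4 := (Finset.sum_eq_zero_iff_of_nonneg h3).mp h2 i (Finset.mem_univ i)
      simpa using Complex.normSq_eq_zero.mp h4
    rw [hB]
    simp

/-- The key pointwise identity: `t * tr(M (t⁻¹ • A)) = tr(M A)` for `t = tr(A).re` when `A`
is PSD (including the degenerate case `t = 0`). -/
lemma term_eq {M A : Matrix (Fin d) (Fin d) ℂ} (hA : A.PosSemidef) :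
    A.trace.re * (M * ((A.trace.re)⁻¹ • A)).trace.re = (M * A).trace.re := by
  have hsm : M * ((A.trace.re)⁻¹ • A) = (A.trace.re)⁻¹ • (M * A) := Matrix.mul_smul _ _ _
  rw [hsm, Matrix.trace_smul]
  rcases eq_or_ne A.trace.re 0 with h | h
  · have hz := (psd_trace_facts hA).2.2 h
    rw [h, hz]
    simp
  · rw [Complex.real_smul, Complex.re_ofReal_mul]
    field_simp

/-- The conjugation identity: `∑ i, tr(M V_i σ V_i†) = tr(M σ)` using the commutation
hypothesis and the Kraus normalization. -/
lemma sum_step {O : Type*} [Fintype O] (V : O → Matrix (Fin d) (Fin d) ℂ)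
    (hV : ∑ i, (V i)ᴴ * V i = 1)
    (M : Matrix (Fin d) (Fin d) ℂ) (hHerm : M.IsHermitian)
    (hComm : ∀ i, M * V i = V i * M)
    (σ : Matrix (Fin d) (Fin d) ℂ) :
    ∑ i, (M * (V i * σ * (V i)ᴴ)).trace = (M * σ).trace := by
  have hC : ∀ i, (V i)ᴴ * M = M * (V i)ᴴ := by
    intro i
    have := congrArg Matrix.conjTranspose (hComm i)
    simpa [Matrix.conjTranspose_mul, hHerm.eq] using this
  have key : ∀ i, (M * (V i * σ * (V i)ᴴ)).trace = (M * ((V i)ᴴ * V i * σ)).trace := by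
    intro i
    have h1 : M * (V i * σ * (V i)ᴴ) = (M * V i * σ) * (V i)ᴴ := by
      noncomm_ring
    rw [h1, Matrix.trace_mul_comm]
    congr 1
    calc (V i)ᴴ * (M * V i * σ) = ((V i)ᴴ * M) * (V i * σ) := by noncomm_ring
    _ = (M * (V i)ᴴ) * (V i * σ) := by rw [hC i]
    _ = M * ((V i)ᴴ * V i * σ) := by noncomm_ring
  calc ∑ i, (M * (V i * σ * (V i)ᴴ)).trace
      = ∑ i, (M * ((V i)ᴴ * V i * σ)).trace := by
        exact Finset.sum_congr rfl fun i _ => key i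
    _ = (M * ((∑ i, (V i)ᴴ * V i) * σ)).trace := by
        rw [Finset.sum_mul, Matrix.mul_sum, Matrix.trace_sum]
    _ = (M * σ).trace := by rw [hV, one_mul]

/-- Nonnegativity of `tr(P σ).re` for a Hermitian projector `P` and PSD `σ`. -/
lemma proj_trace_nonneg {P : Matrix (Fin d) (Fin d) ℂ} (hP : P.IsHermitian)
    (hPP : P * P = P) {σ : Matrix (Fin d) (Fin d) ℂ} (hσ : σ.PosSemidef) :
    0 ≤ (P * σ).trace.re := by
  have h1 : (P * σ).trace = (P * σ * Pᴴ).trace := by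
    rw [hP.eq]
    calc (P * σ).trace = ((P * P) * σ).trace := by rw [hPP]
      _ = (P * (P * σ)).trace := by rw [Matrix.mul_assoc]
      _ = ((P * σ) * P).trace := (Matrix.trace_mul_comm _ _).symm
      _ = (P * σ * P).trace := rfl
  rw [h1]
  exact (psd_trace_facts (hσ.mul_mul_conjTranspose_same P)).2.1

/-- `wordOp` of a snoc. -/
lemma wordOp_snoc {O : Type*} (V : O → Matrix (Fin d) (Fin d) ℂ) {n : ℕ}
    (J : Fin n → O) (i : O) :
    wordOp V (Fin.snoc J i) = V i * wordOp V J := by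
  unfold wordOp
  rw [List.ofFn_succ']
  simp [Fin.snoc_castSucc, Fin.snoc_last, List.concat_eq_append]

end aux

/-- if M is a projector commuting with each Kraus operator, then along the
quantum trajectory (outcome i with probability tr(V_i ρ V_i†), posterior state
V_i ρ V_i† / tr(V_i ρ V_i†)), the process (tr(M ρ_n)) is a bounded martingale; in particular
E[tr(M ρ_n)] = tr(M ρ₀) for all n.  The martingale property is expressed as: for every
density matrix ρ', the expected value of tr(M ·) after one measurement step equals tr(M ρ'),
the process is bounded in [0,1], and the expectation after n steps starting from ρ₀ equals
tr(M ρ₀). -/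
theorem stmt3 {d : ℕ} {O : Type*} [Fintype O] [DecidableEq O]
    (V : O → Matrix (Fin d) (Fin d) ℂ)
    (hV : ∑ i, (V i)ᴴ * V i = 1)
    (M : Matrix (Fin d) (Fin d) ℂ)
    (hHerm : M.IsHermitian) (hProj : M * M = M)
    (hComm : ∀ i, M * V i = V i * M)
    (ρ₀ : Matrix (Fin d) (Fin d) ℂ) (hρ₀ : ρ₀.PosSemidef) (hρ₀1 : ρ₀.trace = 1) :
    -- one-step martingale property, conditionally on the current state ρ'
    (∀ ρ' : Matrix (Fin d) (Fin d) ℂ, ρ'.PosSemidef → ρ'.trace = 1 →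
      ∑ i : O, (V i * ρ' * (V i)ᴴ).trace.re *
        (M * (((V i * ρ' * (V i)ᴴ).trace.re)⁻¹ • (V i * ρ' * (V i)ᴴ))).trace.re
      = (M * ρ').trace.re) ∧
    -- boundedness of the process
    (∀ ρ' : Matrix (Fin d) (Fin d) ℂ, ρ'.PosSemidef → ρ'.trace = 1 →
      0 ≤ (M * ρ').trace.re ∧ (M * ρ').trace.re ≤ 1) ∧
    -- in particular, E[tr(M ρ_n)] = tr(M ρ₀) for all n
    (∀ n : ℕ, ∑ I : Fin n → O,
      (wordOp V I * ρ₀ * (wordOp V I)ᴴ).trace.re *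
        (M * (((wordOp V I * ρ₀ * (wordOp V I)ᴴ).trace.re)⁻¹ •
          (wordOp V I * ρ₀ * (wordOp V I)ᴴ))).trace.re
      = (M * ρ₀).trace.re) := by
  -- a general one-step identity for any PSD σ (not necessarily normalized)
  have onestep : ∀ σ : Matrix (Fin d) (Fin d) ℂ, σ.PosSemidef →
      ∑ i : O, (V i * σ * (V i)ᴴ).trace.re *
        (M * (((V i * σ * (V i)ᴴ).trace.re)⁻¹ • (V i * σ * (V i)ᴴ))).trace.re
      = (M * σ).trace.re := by
    intro σ hσ
    have h1 : ∀ i : O, (V i * σ * (V i)ᴴ).trace.re *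
        (M * (((V i * σ * (V i)ᴴ).trace.re)⁻¹ • (V i * σ * (V i)ᴴ))).trace.re
        = (M * (V i * σ * (V i)ᴴ)).trace.re := fun i =>
      term_eq (hσ.mul_mul_conjTranspose_same (V i))
    calc ∑ i : O, (V i * σ * (V i)ᴴ).trace.re *
          (M * (((V i * σ * (V i)ᴴ).trace.re)⁻¹ • (V i * σ * (V i)ᴴ))).trace.re
        = ∑ i : O, (M * (V i * σ * (V i)ᴴ)).trace.re :=
          Finset.sum_congr rfl fun i _ => h1 i
      _ = (∑ i : O, (M * (V i * σ * (V i)ᴴ)).trace).re := by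
          rw [Complex.re_sum]
      _ = (M * σ).trace.re := by rw [sum_step V hV M hHerm hComm σ]
  refine ⟨fun ρ' hρ' _ => onestep ρ' hρ', ?_, ?_⟩
  · -- boundedness
    intro ρ' hρ' hρ'1
    constructor
    · exact proj_trace_nonneg hHerm hProj hρ'
    · -- 1 - tr(Mρ').re = tr((1-M)ρ').re ≥ 0
      have hP : (1 - M).IsHermitian := by
        simpa using (Matrix.isHermitian_one (n := Fin d)).sub hHerm
      have hPP : (1 - M) * (1 - M) = 1 - M := by
        have : (1 - M) * (1 - M) = 1 - M - M + M * M := by noncomm_ring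
        rw [this, hProj]; abel
      have h0 := proj_trace_nonneg hP hPP hρ'
      have he : ((1 - M) * ρ').trace = ρ'.trace - (M * ρ').trace := by
        rw [Matrix.sub_mul, Matrix.trace_sub, Matrix.one_mul]
      rw [he, hρ'1] at h0
      have : (0:ℝ) ≤ 1 - (M * ρ').trace.re := by simpa using h0
      linarith
  · -- the n-step identity by induction
    intro n
    induction n with
    | zero =>
      have : ∀ I : Fin 0 → O, wordOp V I = 1 := by
        intro I
        simp [wordOp]
      rw [Fintype.sum_unique]
      rw [this]
      simp [hρ₀1]
    | succ n ih =>
      -- reindex the sum over words of length n+1 by (word of length n, last letter)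
      have hbij : Function.Bijective
          (fun p : (Fin n → O) × O => (Fin.snoc p.1 p.2 : Fin (n+1) → O)) := by
        constructor
        · rintro ⟨J, i⟩ ⟨J', i'⟩ h
          have h1 : ∀ k : Fin n, J k = J' k := by
            intro k
            have := congrFun h (Fin.castSucc k)
            simpa [Fin.snoc_castSucc] using this
          have h2 : i = i' := by
            have := congrFun h (Fin.last n)
            simpa [Fin.snoc_last] using this
          exact Prod.ext (funext h1) h2
        · intro I
          exact ⟨(fun k => I (Fin.castSucc k), I (Fin.last n)), Fin.snoc_init_self I⟩
      rw [← Function.Bijective.sum_comp hbij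
        (fun I : Fin (n+1) → O => (wordOp V I * ρ₀ * (wordOp V I)ᴴ).trace.re *
          (M * (((wordOp V I * ρ₀ * (wordOp V I)ᴴ).trace.re)⁻¹ •
            (wordOp V I * ρ₀ * (wordOp V I)ᴴ))).trace.re)]
      rw [Fintype.sum_prod_type]
      have hgroup : ∀ J : Fin n → O,
          (∑ i : O,
            (wordOp V (Fin.snoc J i) * ρ₀ * (wordOp V (Fin.snoc J i))ᴴ).trace.re *
            (M * (((wordOp V (Fin.snoc J i) * ρ₀ * (wordOp V (Fin.snoc J i))ᴴ).trace.re)⁻¹ •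
              (wordOp V (Fin.snoc J i) * ρ₀ * (wordOp V (Fin.snoc J i))ᴴ))).trace.re)
          = (wordOp V J * ρ₀ * (wordOp V J)ᴴ).trace.re *
            (M * (((wordOp V J * ρ₀ * (wordOp V J)ᴴ).trace.re)⁻¹ •
              (wordOp V J * ρ₀ * (wordOp V J)ᴴ))).trace.re := by
        intro J
        set σ := wordOp V J * ρ₀ * (wordOp V J)ᴴ with hσdef
        have hσ : σ.PosSemidef := hρ₀.mul_mul_conjTranspose_same (wordOp V J)
        have hrw : ∀ i : O,
            wordOp V (Fin.snoc J i) * ρ₀ * (wordOp V (Fin.snoc J i))ᴴ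
            = V i * σ * (V i)ᴴ := by
          intro i
          rw [wordOp_snoc, hσdef]
          simp only [Matrix.conjTranspose_mul]
          noncomm_ring
        calc (∑ i : O,
              (wordOp V (Fin.snoc J i) * ρ₀ * (wordOp V (Fin.snoc J i))ᴴ).trace.re *
              (M * (((wordOp V (Fin.snoc J i) * ρ₀ * (wordOp V (Fin.snoc J i))ᴴ).trace.re)⁻¹ •
                (wordOp V (Fin.snoc J i) * ρ₀ * (wordOp V (Fin.snoc J i))ᴴ))).trace.re)
            = ∑ i : O, (V i * σ * (V i)ᴴ).trace.re *
              (M * (((V i * σ * (V i)ᴴ).trace.re)⁻¹ • (V i * σ * (V i)ᴴ))).trace.re := by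
              refine Finset.sum_congr rfl fun i _ => ?_
              rw [hrw i]
          _ = (M * σ).trace.re := onestep σ hσ
          _ = σ.trace.re * (M * ((σ.trace.re)⁻¹ • σ)).trace.re := (term_eq hσ).symm
      calc (∑ J : Fin n → O, ∑ i : O,
            (wordOp V (Fin.snoc J i) * ρ₀ * (wordOp V (Fin.snoc J i))ᴴ).trace.re *
            (M * (((wordOp V (Fin.snoc J i) * ρ₀ * (wordOp V (Fin.snoc J i))ᴴ).trace.re)⁻¹ •
              (wordOp V (Fin.snoc J i) * ρ₀ * (wordOp V (Fin.snoc J i))ᴴ))).trace.re)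
          = ∑ J : Fin n → O,
            (wordOp V J * ρ₀ * (wordOp V J)ᴴ).trace.re *
            (M * (((wordOp V J * ρ₀ * (wordOp V J)ᴴ).trace.re)⁻¹ •
              (wordOp V J * ρ₀ * (wordOp V J)ᴴ))).trace.re :=
            Finset.sum_congr rfl fun J _ => hgroup J
        _ = (M * ρ₀).trace.re := ih
end

section
/- Let (ρ_n) be a discrete-time quantum trajectory with Kraus operators (V_i) and let M_1,…,M_ℓ be orthogonal projectors summing to the identity and each commuting with every V_i. Then the process W(ρ_n) = (1/2) Σ_{α≠β} √(tr(M_α ρ_n) tr(M_β ρ_n)) is a supermartingale: E[W(ρ_{n+1}) | ρ_n] ≤ W(ρ_n). -/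
open Matrix BigOperators
open scoped ComplexOrder

lemma trace_re_nonneg' {d : ℕ} {τ : Matrix (Fin d) (Fin d) ℂ} (h : τ.PosSemidef) :
    0 ≤ τ.trace.re := by
  have hd : ∀ i, 0 ≤ (τ i i).re := by
    intro i
    have h2 := h.re_dotProduct_nonneg (Pi.single i 1)
    simpa [Matrix.mulVec_single, dotProduct, Pi.single_apply, Finset.sum_ite_eq] using h2
  rw [Matrix.trace, Complex.re_sum]
  exact Finset.sum_nonneg fun i _ => hd i

lemma proj_trace_re_nonneg {d : ℕ} {τ N : Matrix (Fin d) (Fin d) ℂ} (h : τ.PosSemidef)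
    (hN : N.IsHermitian) (hP : N * N = N) : 0 ≤ (N * τ).trace.re := by
  have h1 : (N * τ * Nᴴ).PosSemidef := h.mul_mul_conjTranspose_same N
  have h2 : (N * τ * Nᴴ).trace = (N * τ).trace := by
    rw [hN.eq, Matrix.trace_mul_cycle, hP]
  have := trace_re_nonneg' h1
  rwa [h2] at this

/-- The Lyapunov function W(ρ) = (1/2) Σ_{α≠β} √(tr(M_α ρ) tr(M_β ρ)). -/
noncomputable def Wfun {d ℓ : ℕ} (M : Fin ℓ → Matrix (Fin d) (Fin d) ℂ)
    (ρ : Matrix (Fin d) (Fin d) ℂ) : ℝ :=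
  (1 / 2 : ℝ) * ∑ α : Fin ℓ, ∑ β ∈ Finset.univ.erase α,
    Real.sqrt ((M α * ρ).trace.re * (M β * ρ).trace.re)

/-- With orthogonal projectors M_1,…,M_ℓ summing to the identity and commuting
with every Kraus operator, the process W(ρ_n) is a supermartingale:
E[W(ρ_{n+1}) | ρ_n] ≤ W(ρ_n), expressed conditionally on the current state ρ. -/
theorem stmt4 {d ℓ : ℕ} {O : Type*} [Fintype O]
    (V : O → Matrix (Fin d) (Fin d) ℂ)
    (hV : ∑ i, (V i)ᴴ * V i = 1)
    (M : Fin ℓ → Matrix (Fin d) (Fin d) ℂ)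
    (hHerm : ∀ α, (M α).IsHermitian) (hProj : ∀ α, M α * M α = M α)
    (hSum : ∑ α, M α = 1)
    (hComm : ∀ α i, M α * V i = V i * M α) :
    ∀ ρ : Matrix (Fin d) (Fin d) ℂ, ρ.PosSemidef → ρ.trace = 1 →
      ∑ i : O, (V i * ρ * (V i)ᴴ).trace.re *
          Wfun M (((V i * ρ * (V i)ᴴ).trace.re)⁻¹ • (V i * ρ * (V i)ᴴ))
        ≤ Wfun M ρ := by
  intro ρ hρ htr
  set σ : O → Matrix (Fin d) (Fin d) ℂ := fun i => V i * ρ * (V i)ᴴ with hσdef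
  have hσ : ∀ i, (σ i).PosSemidef := fun i => hρ.mul_mul_conjTranspose_same (V i)
  set q : Fin ℓ → O → ℝ := fun α i => ((M α) * σ i).trace.re with hqdef
  have hq0 : ∀ α i, 0 ≤ q α i := fun α i =>
    proj_trace_re_nonneg (hσ i) (hHerm α) (hProj α)
  -- M α * σ i = V i * (M α * ρ) * (V i)ᴴ
  have hms : ∀ α i, M α * σ i = V i * (M α * ρ) * (V i)ᴴ := by
    intro α i
    simp only [hσdef]
    rw [← mul_assoc, ← mul_assoc, hComm α i, mul_assoc (V i)]
  -- column sums of q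
  have hqsum : ∀ α, ∑ i, q α i = (M α * ρ).trace.re := by
    intro α
    have h1 : ∀ i, (M α * σ i).trace = ((V i)ᴴ * V i * (M α * ρ)).trace := by
      intro i
      rw [hms α i, Matrix.trace_mul_cycle, mul_assoc]
    have h2 : ∑ i, (M α * σ i).trace = (M α * ρ).trace := by
      simp_rw [h1]
      rw [← Matrix.trace_sum, ← Finset.sum_mul, hV, one_mul]
    calc ∑ i, q α i = (∑ i, (M α * σ i).trace).re := by rw [Complex.re_sum]
      _ = (M α * ρ).trace.re := by rw [h2]
  -- row sums of q : trace of σ i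
  have hp : ∀ i, (σ i).trace.re = ∑ α, q α i := by
    intro i
    have h1 : (σ i).trace = ∑ α, (M α * σ i).trace := by
      rw [← Matrix.trace_sum]
      simp_rw [← Finset.sum_mul, hSum, one_mul]
    rw [h1, Complex.re_sum]
  have hc0 : ∀ i, 0 ≤ (σ i).trace.re := fun i => trace_re_nonneg' (hσ i)
  -- per-outcome identity
  have key : ∀ i, (σ i).trace.re * Wfun M (((σ i).trace.re)⁻¹ • σ i)
      = (1 / 2 : ℝ) * ∑ α : Fin ℓ, ∑ β ∈ Finset.univ.erase α,
          Real.sqrt (q α i * q β i) := by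
    intro i
    set c : ℝ := (σ i).trace.re with hcdef
    have hq' : ∀ α, (M α * (c⁻¹ • σ i)).trace.re = c⁻¹ * q α i := by
      intro α
      rw [mul_smul_comm, Matrix.trace_smul, Complex.smul_re, smul_eq_mul]
    rcases eq_or_lt_of_le (hc0 i) with hc | hc
    · -- c = 0 : all q are zero
      have hq00 : ∀ α, q α i = 0 := by
        intro α
        have hsum0 : ∑ α, q α i = 0 := by rw [← hp i, ← hc]
        exact le_antisymm (hsum0 ▸ Finset.single_le_sum (fun β _ => hq0 β i)
          (Finset.mem_univ α)) (hq0 α i)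
      have hc' : c = 0 := hc.symm
      rw [hc']
      simp [hq00]
    · -- c > 0
      have hWform : Wfun M (c⁻¹ • σ i) = (1 / 2 : ℝ) * ∑ α : Fin ℓ,
          ∑ β ∈ Finset.univ.erase α, c⁻¹ * Real.sqrt (q α i * q β i) := by
        unfold Wfun
        congr 1
        refine Finset.sum_congr rfl fun α _ => Finset.sum_congr rfl fun β _ => ?_
        rw [hq' α, hq' β]
        have : c⁻¹ * q α i * (c⁻¹ * q β i) = c⁻¹ ^ 2 * (q α i * q β i) := by ring
        rw [this, Real.sqrt_mul (sq_nonneg _), Real.sqrt_sq (inv_nonneg.mpr (le_of_lt hc))]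
      rw [hWform]
      simp_rw [← Finset.mul_sum]
      field_simp
      rw [mul_comm c]; exact mul_inv_cancel_right₀ (ne_of_gt hc) _
  calc ∑ i : O, (σ i).trace.re * Wfun M (((σ i).trace.re)⁻¹ • σ i)
      = ∑ i : O, (1 / 2 : ℝ) * ∑ α : Fin ℓ, ∑ β ∈ Finset.univ.erase α,
          Real.sqrt (q α i * q β i) := Finset.sum_congr rfl fun i _ => key i
    _ = (1 / 2 : ℝ) * ∑ α : Fin ℓ, ∑ β ∈ Finset.univ.erase α,
          ∑ i : O, Real.sqrt (q α i * q β i) := by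
        rw [← Finset.mul_sum, Finset.sum_comm]
        congr 1
        exact Finset.sum_congr rfl fun α _ => Finset.sum_comm
    _ ≤ Wfun M ρ := by
        unfold Wfun
        refine mul_le_mul_of_nonneg_left ?_ one_half_pos.le
        refine Finset.sum_le_sum fun α _ => Finset.sum_le_sum fun β _ => ?_
        calc ∑ i : O, Real.sqrt (q α i * q β i)
            = ∑ i : O, Real.sqrt (q α i) * Real.sqrt (q β i) := by
              refine Finset.sum_congr rfl fun i _ => Real.sqrt_mul (hq0 α i) _
          _ ≤ Real.sqrt (∑ i, q α i) * Real.sqrt (∑ i, q β i) :=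
              Real.sum_sqrt_mul_sqrt_le _ (hq0 α) (hq0 β)
          _ = Real.sqrt ((M α * ρ).trace.re * (M β * ρ).trace.re) := by
              rw [← Real.sqrt_mul (Finset.sum_nonneg fun i _ => hq0 α i), hqsum, hqsum]
end
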